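/- Let ω > 0, T > 0, c > 0 and (x₀, ẋ₀) ∈ ℝ². The safe step-length range at (x₀, ẋ₀) is nonempty, i.e. max(L_l⁰, L_l^T) < min(L_u⁰, L_u^T), if and only if |A₂₁x₀ + A₂₂ẋ₀| < ((A₁₁ + 1)/A₁₂)·c. -/

import Mathlib

/-- the safe step-length range at `(x₀,v₀)` is nonempty iff
`|A₂₁x₀ + A₂₂v₀| < ((A₁₁+1)/A₁₂)·c`. -/
theorem stmt13 (ω T c x₀ v₀ : ℝ) (hω : 0 < ω) (hT : 0 < T) (hc : 0 < c)
    (A11 A12 A21 A22 : ℝ)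
    (hA11 : A11 = Real.cosh (ω * T)) (hA12 : A12 = Real.sinh (ω * T) / ω)
    (hA21 : A21 = ω * Real.sinh (ω * T)) (hA22 : A22 = Real.cosh (ω * T)) :
    (max (A11 * x₀ + A12 * v₀ - c) ((2 * A11 - 1 / A11) * x₀ + 2 * A12 * v₀ - c / A11)
      < min (A11 * x₀ + A12 * v₀ + c) ((2 * A11 - 1 / A11) * x₀ + 2 * A12 * v₀ + c / A11))
    ↔ |A21 * x₀ + A22 * v₀| < ((A11 + 1) / A12) * c := by
  subst hA11 hA12 hA21 hA22
  set u := ω * T with hu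
  have hu0 : 0 < u := mul_pos hω hT
  set C := Real.cosh u with hCdef
  set S := Real.sinh u with hSdef
  have hC : 1 ≤ C := Real.one_le_cosh u
  have hC0 : 0 < C := by linarith
  have hS : 0 < S := Real.sinh_pos_iff.mpr hu0
  have hsq : C ^ 2 - S ^ 2 = 1 := Real.cosh_sq_sub_sinh_sq u
  set s := C * x₀ + S / ω * v₀ with hs
  set t := (2 * C - 1 / C) * x₀ + 2 * (S / ω) * v₀ with ht
  have hk : 0 < C * ω / S := by positivity
  have key : ω * S * x₀ + C * v₀ = (C * ω / S) * (t - s) := by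
    rw [ht, hs]
    field_simp
    linear_combination (-(ω * x₀)) * hsq
  have hcC : 0 < c / C := by positivity
  rw [key, abs_mul, abs_of_pos hk]
  have hr : ((C + 1) / (S / ω)) * c = (C * ω / S) * ((c + c / C) ) := by
    field_simp
  rw [hr, mul_lt_mul_iff_right₀ hk, abs_lt, lt_min_iff, max_lt_iff, max_lt_iff]
  constructor
  · rintro ⟨⟨h1, h2⟩, h3, h4⟩
    constructor <;> linarith
  · rintro ⟨h1, h2⟩
    refine ⟨⟨by linarith, by linarith⟩, by linarith, by linarith⟩
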